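/- There exists a metric d' on ℝ, topologically equivalent to the Euclidean metric, such that the real line with metric d' and Lebesgue measure is a metric measure space of exact polynomial volume growth of degree 1 (i.e. for every x, μ(B_{d'}(x,t))/(c t) → 1 as t → ∞ for some fixed constant c > 0), but the convergence is not uniform over x ∈ ℝ. -/

import Mathlib

open MeasureTheory Filter

namespace Stmt2Aux

open Metric Set

noncomputable section

def A : Set ℝ := (Set.range fun n : ℕ => (4:ℝ)^n) ∪ (Set.range fun n : ℕ => -(4:ℝ)^n)

lemma A_nonempty : A.Nonempty := ⟨1, Or.inl ⟨0, by norm_num⟩⟩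

lemma one_mem_A : (1:ℝ) ∈ A := Or.inl ⟨0, by norm_num⟩

lemma pow_mem_A (n : ℕ) : ((4:ℝ)^n) ∈ A := Or.inl ⟨n, rfl⟩

lemma neg_image_A : (fun u : ℝ => -u) '' A = A := by
  ext u
  constructor
  · rintro ⟨v, hv, rfl⟩
    rcases hv with ⟨n, rfl⟩ | ⟨n, rfl⟩
    · exact Or.inr ⟨n, rfl⟩
    · exact Or.inl ⟨n, by ring⟩
  · intro hu
    rcases hu with ⟨n, rfl⟩ | ⟨n, rfl⟩
    · exact ⟨-(4^n), Or.inr ⟨n, rfl⟩, by ring⟩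
    · exact ⟨4^n, Or.inl ⟨n, rfl⟩, by ring⟩

def h (u : ℝ) : ℝ := infDist u A / 2

lemma h_nonneg (u : ℝ) : 0 ≤ h u := div_nonneg infDist_nonneg (by norm_num)

lemma h_neg (u : ℝ) : h (-u) = h u := by
  unfold h
  congr 1
  calc infDist (-u) A = infDist (-u) ((fun x : ℝ => -x) '' A) := by rw [neg_image_A]
  _ = infDist u A := infDist_image isometry_neg

lemma infDist_lip (u v : ℝ) : |infDist u A - infDist v A| ≤ |u - v| := by
  have h1 := (lipschitz_infDist_pt A).dist_le_mul u v
  simpa [Real.dist_eq] using h1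

lemma h_lip (u v : ℝ) : |h u - h v| ≤ |u - v| / 2 := by
  have := infDist_lip u v
  unfold h
  rw [div_sub_div_same, abs_div, abs_of_pos (show (0:ℝ) < 2 by norm_num)]
  linarith

def g (u : ℝ) : ℝ := u + h u

lemma g_strictMono : StrictMono g := by
  intro u v huv
  have h1 := h_lip u v
  have h2 : |u - v| = v - u := by rw [abs_sub_comm]; exact abs_of_pos (by linarith)
  rw [h2] at h1
  have h3 := (abs_le.mp h1).2
  show u + h u < v + h v
  linarith

lemma g_cont : Continuous g :=
  continuous_id.add ((continuous_infDist_pt A).div_const 2)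

lemma g_atTop : Tendsto g atTop atTop := by
  apply tendsto_atTop_mono (fun u => ?_) tendsto_id
  exact le_add_of_nonneg_right (h_nonneg u)

lemma g_atBot : Tendsto g atBot atBot := by
  apply tendsto_atBot_mono' atBot (f₁ := fun u : ℝ => u / 2 + 1 / 2)
  · filter_upwards [eventually_le_atBot (1:ℝ)] with u hu
    have h1 : infDist u A ≤ dist u 1 := infDist_le_dist_of_mem one_mem_A
    rw [Real.dist_eq, abs_of_nonpos (by linarith)] at h1
    show u + h u ≤ u / 2 + 1 / 2
    unfold h
    linarith
  · have h1 : Tendsto (fun u : ℝ => u / 2) atBot atBot :=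
      (tendsto_id (α := ℝ)).atBot_div_const (by norm_num)
    exact tendsto_atBot_add_const_right atBot (1/2) h1

lemma g_surj : Function.Surjective g := g_cont.surjective g_atTop g_atBot

def φ : ℝ ≃o ℝ := StrictMono.orderIsoOfSurjective g g_strictMono g_surj

lemma φ_eq : ⇑φ = g := rfl

def fi : ℝ → ℝ := ⇑φ.symm

lemma fi_g (u : ℝ) : fi (g u) = u := by
  have := φ.symm_apply_apply u
  rwa [φ_eq] at this

lemma g_fi (x : ℝ) : g (fi x) = x := by
  have := φ.apply_symm_apply x
  rwa [φ_eq] at this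

lemma fi_inj : Function.Injective fi := φ.symm.injective

def m : MetricSpace ℝ := MetricSpace.induced fi fi_inj inferInstance

lemma top_eq : m.toUniformSpace.toTopologicalSpace = (inferInstance : TopologicalSpace ℝ) := by
  have h1 : m.toUniformSpace.toTopologicalSpace
      = TopologicalSpace.induced fi (inferInstance : TopologicalSpace ℝ) :=
    UniformSpace.toTopologicalSpace_comap
  rw [h1]
  have h2 : fi = ⇑(φ.symm.toHomeomorph) := rfl
  rw [h2]
  exact (φ.symm.toHomeomorph).induced_eq

lemma ball_eq (x t : ℝ) :
    @Metric.closedBall ℝ m.toPseudoMetricSpace x t = Icc (g (fi x - t)) (g (fi x + t)) := by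
  ext y
  have key1 : ∀ a : ℝ, a ≤ fi y ↔ g a ≤ y := fun a => by
    rw [← g_strictMono.le_iff_le (a := a) (b := fi y), g_fi]
  have key2 : ∀ a : ℝ, fi y ≤ a ↔ y ≤ g a := fun a => by
    rw [← g_strictMono.le_iff_le (a := fi y) (b := a), g_fi]
  show dist (fi y) (fi x) ≤ t ↔ _
  rw [Real.dist_eq, abs_le, Set.mem_Icc]
  constructor
  · rintro ⟨h1, h2⟩
    exact ⟨(key1 _).mp (by linarith), (key2 _).mp (by linarith)⟩
  · rintro ⟨h1, h2⟩
    have := (key1 _).mpr h1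
    have := (key2 _).mpr h2
    constructor <;> linarith

lemma vol_eq (x t : ℝ) (ht : 0 ≤ t) :
    (volume (@Metric.closedBall ℝ m.toPseudoMetricSpace x t)).toReal
      = 2*t + (h (fi x + t) - h (fi x - t)) := by
  rw [ball_eq, Real.volume_Icc, ENNReal.toReal_ofReal ?_]
  · show (fi x + t + h (fi x + t)) - (fi x - t + h (fi x - t)) = _
    ring
  · have := g_strictMono.monotone (show fi x - t ≤ fi x + t by linarith)
    linarith

lemma h_diff (s t : ℝ) : |h (s + t) - h (s - t)| ≤ |s| := by
  have e1 : h (s - t) = h (t - s) := by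
    rw [← h_neg (t - s)]; ring_nf
  rw [e1]
  have h1 := h_lip (s + t) (t - s)
  have e2 : (s + t) - (t - s) = 2 * s := by ring
  rw [e2, abs_mul] at h1
  have : |(2:ℝ)| = 2 := by norm_num
  rw [this] at h1
  linarith

lemma infDist_mid (n : ℕ) : infDist ((5/2) * 4^n : ℝ) A = (3/2) * 4^n := by
  apply le_antisymm
  · have h1 := infDist_le_dist_of_mem (x := ((5/2) * 4^n : ℝ)) (pow_mem_A n)
    rw [Real.dist_eq, show (5/2) * (4:ℝ)^n - 4^n = (3/2)*4^n by ring,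
      abs_of_nonneg (by positivity)] at h1
    exact h1
  · by_contra hc
    push_neg at hc
    rw [infDist_lt_iff A_nonempty] at hc
    obtain ⟨y, hy, hd⟩ := hc
    rw [Real.dist_eq] at hd
    have hpos : (0:ℝ) < 4^n := by positivity
    rcases hy with ⟨k, rfl⟩ | ⟨k, rfl⟩
    · rcases le_or_gt k n with hk | hk
      · have h1 : (4:ℝ)^k ≤ 4^n := pow_le_pow_right₀ (by norm_num) hk
        have h2 := le_abs_self ((5/2) * (4:ℝ)^n - 4^k)
        have h3 : (0:ℝ) < 4^k := by positivity
        linarith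
      · have h1 : (4:ℝ)^(n+1) ≤ 4^k := pow_le_pow_right₀ (by norm_num) hk
        have h2 : ((4:ℝ))^(n+1) = 4 * 4^n := by ring
        have h3 := neg_abs_le ((5/2) * (4:ℝ)^n - 4^k)
        linarith
    · have h1 : (0:ℝ) < 4^k := by positivity
      have h2 := le_abs_self ((5/2) * (4:ℝ)^n - (-(4:ℝ)^k))
      linarith

lemma pointwise (x : ℝ) :
    Tendsto (fun t : ℝ =>
        (volume (@Metric.closedBall ℝ m.toPseudoMetricSpace x t)).toReal / (2 * t))
      atTop (nhds 1) := by
  set s := fi x with hs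
  have h0 : Tendsto (fun t : ℝ => (h (s + t) - h (s - t)) / (2 * t)) atTop (nhds 0) := by
    apply squeeze_zero_norm' (a := fun t : ℝ => |s| / (2 * t))
    · filter_upwards [eventually_gt_atTop (0:ℝ)] with t ht
      rw [Real.norm_eq_abs, abs_div, abs_of_pos (show (0:ℝ) < 2 * t by linarith)]
      have := h_diff s t
      gcongr
    · exact tendsto_const_nhds.div_atTop (tendsto_id.const_mul_atTop (by norm_num))
  have h1 : Tendsto (fun t : ℝ => 1 + (h (s + t) - h (s - t)) / (2 * t)) atTop (nhds 1) := by
    simpa using tendsto_const_nhds.add h0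
  apply h1.congr'
  filter_upwards [eventually_gt_atTop (0:ℝ)] with t ht
  rw [vol_eq x t ht.le, ← hs]
  have h2t : (2:ℝ) * t ≠ 0 := by positivity
  field_simp

lemma not_uniform :
    ¬ TendstoUniformly
        (fun (t : ℝ) (x : ℝ) =>
          (volume (@Metric.closedBall ℝ m.toPseudoMetricSpace x t)).toReal / (2 * t))
        (fun _ => 1) atTop := by
  intro H
  rw [Metric.tendstoUniformly_iff] at H
  obtain ⟨T, hT⟩ := (eventually_atTop.mp (H (1/4) (by norm_num)))
  obtain ⟨n, hn⟩ := pow_unbounded_of_one_lt (max T 1 * 4) (show (1:ℝ) < 4 by norm_num)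
  set t : ℝ := (3/4) * 4^n with htdef
  have hmax : T ≤ max T 1 := le_max_left _ _
  have hp : (0:ℝ) < 4^n := by positivity
  have ht : T ≤ t := by
    have h4 : 4 * T ≤ max T 1 * 4 := by linarith
    simp only [htdef]
    linarith
  have htpos : (0:ℝ) < t := by positivity
  set x : ℝ := g ((7/4) * 4^n) with hxdef
  have hfx : fi x = (7/4) * 4^n := by rw [hxdef, fi_g]
  have hval : (volume (@Metric.closedBall ℝ m.toPseudoMetricSpace x t)).toReal = 3 * t := by
    rw [vol_eq x t htpos.le, hfx]
    have e1 : (7/4) * (4:ℝ)^n + t = (5/2) * 4^n := by rw [htdef]; ring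
    have e2 : (7/4) * (4:ℝ)^n - t = 4^n := by rw [htdef]; ring
    rw [e1, e2]
    have e3 : h ((4:ℝ)^n) = 0 := by
      unfold h; rw [infDist_zero_of_mem (pow_mem_A n)]; norm_num
    have e4 : h ((5/2) * (4:ℝ)^n) = t := by
      unfold h; rw [infDist_mid n, htdef]; ring
    rw [e3, e4, htdef]; ring
  have hlt := hT t ht x
  rw [hval, Real.dist_eq] at hlt
  have habs : |1 - 3 * t / (2 * t)| = 1/2 := by
    rw [mul_comm 3 t, mul_comm 2 t, mul_div_mul_left _ _ (ne_of_gt htpos)]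
    norm_num
  rw [habs] at hlt
  linarith

end

end Stmt2Aux

theorem stmt2 :
    ∃ (m : MetricSpace ℝ) (c : ℝ), 0 < c ∧
      m.toUniformSpace.toTopologicalSpace = (inferInstance : TopologicalSpace ℝ) ∧
      (∀ x : ℝ, Tendsto
        (fun t : ℝ => (volume (@Metric.closedBall ℝ m.toPseudoMetricSpace x t)).toReal / (c * t))
        atTop (nhds 1)) ∧
      ¬ TendstoUniformly
        (fun (t : ℝ) (x : ℝ) =>
          (volume (@Metric.closedBall ℝ m.toPseudoMetricSpace x t)).toReal / (c * t))
        (fun _ => 1) atTop := by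
  exact ⟨Stmt2Aux.m, 2, by norm_num, Stmt2Aux.top_eq, Stmt2Aux.pointwise, Stmt2Aux.not_uniform⟩
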